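/- For every m ∈ ℕ, every list L of natural numbers sorted in (weakly) descending order with all elements ≤ m lies in the range of lgen_m, where lgen_m 0 = [] and lgen_m (x+1) = next_m (lgen_m x). -/

import Mathlib

def next (m : ℕ) : List ℕ → List ℕ
  | [] => [0]
  | h :: t =>
    if h < m then (h + 1) :: t
    else
      match next m t with
      | [] => []
      | x :: t' => x :: x :: t'

def lgen (m : ℕ) : ℕ → List ℕ
  | 0 => []
  | n + 1 => next m (lgen m n)

/-- Predecessor of a list in the enumeration. -/
def prev (m : ℕ) : List ℕ → List ℕ
  | [] => []
  | h :: t =>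
    if t.headD 0 < h then (h - 1) :: t
    else if t.isEmpty then [] else m :: prev m t

/-- Weight measure: value in base (m+1) with digits shifted by 1. -/
def wt (m : ℕ) : List ℕ → ℕ
  | [] => 0
  | h :: t => h + 1 + (m + 1) * wt m t

lemma key (m : ℕ) : ∀ L : List ℕ, L.Pairwise (· ≥ ·) → (∀ x ∈ L, x ≤ m) → L ≠ [] →
    next m (prev m L) = L ∧ (prev m L).Pairwise (· ≥ ·) ∧
      (∀ x ∈ prev m L, x ≤ m) ∧ wt m (prev m L) < wt m L := by
  intro L
  induction L with
  | nil => intro _ _ h; exact absurd rfl h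
  | cons h t ih =>
    intro hs hb _
    rw [List.pairwise_cons] at hs
    have hhm : h ≤ m := hb h (by simp)
    by_cases hlt : t.headD 0 < h
    · -- prev = (h-1) :: t
      have hprev : prev m (h :: t) = (h - 1) :: t := by
        simp only [prev, if_pos hlt]
      refine ⟨?_, ?_, ?_, ?_⟩
      · rw [hprev]
        have : h - 1 < m := by omega
        simp [next, this]
        omega
      · rw [hprev, List.pairwise_cons]
        refine ⟨fun b hbmem => ?_, hs.2⟩
        have hb1 := hs.1 b hbmem
        cases t with
        | nil => simp at hbmem
        | cons y t2 =>
          simp at hlt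
          rcases List.mem_cons.mp hbmem with rfl | hmem
          · omega
          · have := (List.pairwise_cons.mp hs.2).1 b hmem
            omega
      · rw [hprev]
        intro x hx
        rcases List.mem_cons.mp hx with rfl | hmem
        · omega
        · exact hb x (List.mem_cons_of_mem _ hmem)
      · rw [hprev]
        simp [wt]
        omega
    · -- h = head of t (or t = [] and h = 0)
      cases t with
      | nil =>
        simp at hlt
        subst hlt
        refine ⟨?_, ?_, ?_, ?_⟩ <;> simp [prev, next, wt]
      | cons y t2 =>
        simp at hlt
        have hy : y ≤ h := hs.1 y (by simp)
        have hhy : h = y := le_antisymm hlt hy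
        have hprev : prev m (h :: y :: t2) = m :: prev m (y :: t2) := by
          simp [prev, hlt, Nat.not_lt.mpr hlt]
        have hb' : ∀ x ∈ y :: t2, x ≤ m := fun x hx => hb x (List.mem_cons_of_mem _ hx)
        obtain ⟨ih1, ih2, ih3, ih4⟩ := ih hs.2 hb' (by simp)
        refine ⟨?_, ?_, ?_, ?_⟩
        · rw [hprev]
          have hnm : ¬ m < m := lt_irrefl m
          simp only [next, if_neg hnm, ih1]
          rw [hhy]
        · rw [hprev, List.pairwise_cons]
          exact ⟨ih3, ih2⟩
        · rw [hprev]
          intro x hx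
          rcases List.mem_cons.mp hx with rfl | hmem
          · rfl
          · exact ih3 x hmem
        · rw [hprev]
          have ha : wt m (m :: prev m (y :: t2)) =
              m + 1 + (m + 1) * wt m (prev m (y :: t2)) := rfl
          have hc : wt m (h :: y :: t2) = h + 1 + (m + 1) * wt m (y :: t2) := rfl
          have h2 : (m + 1) * (wt m (prev m (y :: t2)) + 1) ≤ (m + 1) * wt m (y :: t2) :=
            Nat.mul_le_mul_left _ (Nat.succ_le_of_lt ih4)
          rw [Nat.mul_add, Nat.mul_one] at h2
          rw [ha, hc]
          omega

theorem stmt_14 (m : ℕ) (L : List ℕ) (hsorted : L.Pairwise (· ≥ ·))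
    (hle : ∀ x ∈ L, x ≤ m) : ∃ n : ℕ, lgen m n = L := by
  have H : ∀ N, ∀ L : List ℕ, wt m L ≤ N → L.Pairwise (· ≥ ·) → (∀ x ∈ L, x ≤ m) →
      ∃ n : ℕ, lgen m n = L := by
    intro N
    induction N with
    | zero =>
      intro L hw _ _
      cases L with
      | nil => exact ⟨0, rfl⟩
      | cons h t => simp [wt] at hw
    | succ N ihN =>
      intro L hw hs hb
      cases hL : L with
      | nil => exact ⟨0, rfl⟩
      | cons h t =>
        subst hL
        obtain ⟨k1, k2, k3, k4⟩ := key m (h :: t) hs hb (by simp)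
        obtain ⟨n, hn⟩ := ihN (prev m (h :: t)) (by omega) k2 k3
        exact ⟨n + 1, by simp [lgen, hn, k1]⟩
  exact H (wt m L) L le_rfl hsorted hle
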